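/- Let (w_n) be a sequence of non-negative reals and α ∈ ℝ. Suppose there are constants A, B > 0 such that A·x·(log x)^{-α} ≤ ∑_{n ≤ x} w_n ≤ B·x·(log x)^{-α} for all x ≥ 2. Then for σ ∈ (1/2, 1), the sum ∑_{n≥1} w_n n^{-2σ} is comparable (up to positive multiplicative constants independent of σ) to ∑_{n≥2} n^{-2σ} (log n)^{-α}. -/

import Mathlib

open Real Filter Asymptotics Topology

private def Wsum (w : ℕ → ℝ) (N : ℕ) : ℝ := ∑ n ∈ Finset.Icc 1 N, w n

private lemma Wsum_range (w : ℕ → ℝ) (m : ℕ) :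
    Wsum w m = ∑ n ∈ Finset.range m, w (n + 1) := by
  induction m with
  | zero => simp [Wsum]
  | succ k ih =>
      rw [Wsum, Finset.sum_Icc_succ_top (by omega), ← Wsum, ih, Finset.sum_range_succ]

private lemma Wsum_nonneg (w : ℕ → ℝ) (hw : ∀ n, 0 ≤ w n) (N : ℕ) : 0 ≤ Wsum w N :=
  Finset.sum_nonneg fun i _ => hw i

private lemma Wsum_mono (w : ℕ → ℝ) (hw : ∀ n, 0 ≤ w n) {a b : ℕ} (h : a ≤ b) :
    Wsum w a ≤ Wsum w b :=
  Finset.sum_le_sum_of_subset_of_nonneg (Finset.Icc_subset_Icc_right h) fun i _ _ => hw i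

private lemma aux_summable (α s : ℝ) (hs : 1 < s) :
    Summable (fun n : ℕ => ((n : ℝ) + 2) ^ (-s) * Real.log ((n : ℝ) + 2) ^ (-α)) := by
  set ε := (s - 1) / 2 with hε
  have hε0 : 0 < ε := by rw [hε]; linarith
  have h1 : (fun x : ℝ => Real.log x ^ (-α)) =o[atTop] fun x : ℝ => x ^ ε :=
    isLittleO_log_rpow_rpow_atTop (-α) hε0
  have h2 : (fun x : ℝ => x ^ (-s) * Real.log x ^ (-α)) =o[atTop]
      fun x : ℝ => x ^ (-s) * x ^ ε :=
    (isBigO_refl (fun x : ℝ => x ^ (-s)) atTop).mul_isLittleO h1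
  have hcomp : Tendsto (fun n : ℕ => (n : ℝ) + 2) atTop atTop :=
    tendsto_atTop_add_const_right _ 2 tendsto_natCast_atTop_atTop
  have h3 := (h2.comp_tendsto hcomp).isBigO
  have h5 : Summable (fun n : ℕ => ((n : ℝ) + 2) ^ (-s + ε)) := by
    have h6 : Summable (fun n : ℕ => ((n + 2 : ℕ) : ℝ) ^ (-s + ε)) :=
      (summable_nat_add_iff (f := fun n : ℕ => (n : ℝ) ^ (-s + ε)) 2).2
        (summable_nat_rpow.2 (by rw [hε]; linarith))
    refine h6.congr fun n => by push_cast; ring_nf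
  refine summable_of_isBigO_nat h5 (h3.trans (Asymptotics.isBigO_of_le _ fun n => ?_))
  have hx : (0:ℝ) < (n : ℝ) + 2 := by positivity
  simp only [Function.comp]
  rw [← Real.rpow_add hx]

private lemma aux_d (s : ℝ) (hs1 : 1 ≤ s) (hs2 : s ≤ 2) (x : ℝ) (hx : 1 ≤ x) :
    x ^ (-s) / (x + 1) ≤ x ^ (-s) - (x + 1) ^ (-s) ∧
      x ^ (-s) - (x + 1) ^ (-s) ≤ 2 * (x ^ (-s) / (x + 1)) := by
  have hx0 : (0:ℝ) < x := by linarith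
  have hx1 : (0:ℝ) < x + 1 := by linarith
  set r := x / (x + 1) with hr
  have hr0 : 0 < r := by positivity
  have hr1 : r ≤ 1 := by rw [hr, div_le_one hx1]; linarith
  have hkey : (x + 1) ^ (-s) = x ^ (-s) * r ^ s := by
    rw [hr, div_rpow hx0.le hx1.le, Real.rpow_neg hx0.le, Real.rpow_neg hx1.le]
    field_simp
  have hrs_le : r ^ s ≤ r := by
    simpa using rpow_le_rpow_of_exponent_ge hr0 hr1 hs1
  have hrs_ge : r * r ≤ r ^ s := by
    have h := rpow_le_rpow_of_exponent_ge hr0 hr1 hs2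
    have h2 : r ^ (2:ℝ) = r * r := by
      rw [show (2:ℝ) = ((2:ℕ):ℝ) by norm_num, Real.rpow_natCast]; ring
    calc r * r = r ^ (2:ℝ) := h2.symm
      _ ≤ r ^ s := h
  have hone : 1 - r = 1 / (x + 1) := by rw [hr]; field_simp; ring
  have hP : (0:ℝ) < x ^ (-s) := rpow_pos_of_pos hx0 _
  constructor
  · calc x ^ (-s) / (x + 1) = x ^ (-s) * (1 - r) := by rw [hone]; ring
      _ ≤ x ^ (-s) * (1 - r ^ s) := by nlinarith
      _ = x ^ (-s) - (x + 1) ^ (-s) := by rw [hkey]; ring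
  · calc x ^ (-s) - (x + 1) ^ (-s) = x ^ (-s) * (1 - r ^ s) := by rw [hkey]; ring
      _ ≤ x ^ (-s) * (2 * (1 - r)) := by
          have h12 : 1 - r ^ s ≤ 2 * (1 - r) := by nlinarith [sq_nonneg (1 - r)]
          exact mul_le_mul_of_nonneg_left h12 hP.le
      _ = 2 * (x ^ (-s) / (x + 1)) := by rw [hone]; ring

private lemma aux_d_nonneg (s : ℝ) (hs1 : 1 ≤ s) (hs2 : s ≤ 2) (x : ℝ) (hx : 1 ≤ x) :
    0 ≤ x ^ (-s) - (x + 1) ^ (-s) := by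
  have h := (aux_d s hs1 hs2 x hx).1
  have hx0 : (0:ℝ) < x := by linarith
  have h2 : (0:ℝ) < x ^ (-s) / (x + 1) := by positivity
  linarith

private lemma aux_hasSum (s : ℝ) (hs1 : 1 ≤ s) (hs2 : s ≤ 2) (n : ℕ) :
    HasSum (fun m : ℕ => if n + 1 ≤ m then ((m:ℝ) ^ (-s) - ((m:ℝ) + 1) ^ (-s)) else 0)
      (((n:ℝ) + 1) ^ (-s)) := by
  have hs0 : (0:ℝ) < s := by linarith
  have hnonneg : ∀ m : ℕ, 0 ≤ (if n + 1 ≤ m then ((m:ℝ) ^ (-s) - ((m:ℝ) + 1) ^ (-s)) else 0) := by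
    intro m
    split
    · rename_i h
      exact aux_d_nonneg s hs1 hs2 m (by exact_mod_cast Nat.one_le_iff_ne_zero.2 (by omega))
    · exact le_refl 0
  rw [hasSum_iff_tendsto_nat_of_nonneg hnonneg]
  have hev : (fun M : ℕ => ((n:ℝ) + 1) ^ (-s) - (M:ℝ) ^ (-s)) =ᶠ[atTop]
      (fun M : ℕ => ∑ m ∈ Finset.range M,
        if n + 1 ≤ m then ((m:ℝ) ^ (-s) - ((m:ℝ) + 1) ^ (-s)) else 0) := by
    filter_upwards [eventually_ge_atTop (n + 1)] with M hM
    rw [← Finset.sum_filter]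
    have hflt : (Finset.range M).filter (fun m => n + 1 ≤ m) = Finset.Ico (n + 1) M := by
      ext m; simp only [Finset.mem_filter, Finset.mem_range, Finset.mem_Ico]; omega
    rw [hflt, Finset.sum_Ico_eq_sum_range]
    have hterm : ∀ k : ℕ,
        ((((n+1+k : ℕ)):ℝ) ^ (-s) - ((((n+1+k:ℕ)):ℝ) + 1) ^ (-s))
          = (fun j : ℕ => (((n+1+j : ℕ)):ℝ) ^ (-s)) k
            - (fun j : ℕ => (((n+1+j : ℕ)):ℝ) ^ (-s)) (k + 1) := by
      intro k
      simp only
      congr 2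
      push_cast; ring
    rw [Finset.sum_congr rfl fun k _ => hterm k,
      Finset.sum_range_sub' (fun j : ℕ => (((n+1+j : ℕ)):ℝ) ^ (-s)) (M - (n+1))]
    have h1 : n + 1 + 0 = n + 1 := by omega
    have h2 : n + 1 + (M - (n + 1)) = M := by omega
    rw [h1, h2]
    push_cast
    ring
  have h0 : Tendsto (fun M : ℕ => ((M:ℝ)) ^ (-s)) atTop (nhds 0) :=
    (tendsto_rpow_neg_atTop hs0).comp tendsto_natCast_atTop_atTop
  have hlim := (tendsto_const_nhds (x := ((n:ℝ) + 1) ^ (-s)) (f := atTop)).sub h0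
  rw [sub_zero] at hlim
  exact Tendsto.congr' hev hlim

private lemma aux_tonelli (w : ℕ → ℝ) (hw : ∀ n, 0 ≤ w n) (s : ℝ) (hs1 : 1 ≤ s) (hs2 : s ≤ 2) :
    ∑' n : ℕ, ENNReal.ofReal (w (n + 1) * ((n:ℝ) + 1) ^ (-s)) =
      ∑' m : ℕ, ENNReal.ofReal (Wsum w m * ((m:ℝ) ^ (-s) - ((m:ℝ) + 1) ^ (-s))) := by
  set F : ℕ → ℕ → ENNReal := fun n m =>
    if n + 1 ≤ m then ENNReal.ofReal (w (n + 1) * ((m:ℝ) ^ (-s) - ((m:ℝ) + 1) ^ (-s))) else 0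
    with hF
  have hrow : ∀ n : ℕ, ∑' m : ℕ, F n m = ENNReal.ofReal (w (n + 1) * ((n:ℝ) + 1) ^ (-s)) := by
    intro n
    have hHS := aux_hasSum s hs1 hs2 n
    have hnonneg : ∀ m : ℕ,
        0 ≤ (if n + 1 ≤ m then ((m:ℝ) ^ (-s) - ((m:ℝ) + 1) ^ (-s)) else 0) := by
      intro m
      split
      · rename_i h
        exact aux_d_nonneg s hs1 hs2 m (by exact_mod_cast Nat.one_le_iff_ne_zero.2 (by omega))
      · exact le_refl 0
    calc ∑' m : ℕ, F n m
        = ∑' m : ℕ, ENNReal.ofReal (w (n + 1)) *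
            ENNReal.ofReal (if n + 1 ≤ m then ((m:ℝ) ^ (-s) - ((m:ℝ) + 1) ^ (-s)) else 0) := by
          refine tsum_congr fun m => ?_
          by_cases h : n + 1 ≤ m
          · simp only [hF, if_pos h, ENNReal.ofReal_mul (hw (n + 1))]
          · simp only [hF, if_neg h, ENNReal.ofReal_zero, mul_zero]
      _ = ENNReal.ofReal (w (n + 1)) *
            ENNReal.ofReal (∑' m : ℕ,
              (if n + 1 ≤ m then ((m:ℝ) ^ (-s) - ((m:ℝ) + 1) ^ (-s)) else 0)) := by
          rw [ENNReal.tsum_mul_left, ENNReal.ofReal_tsum_of_nonneg hnonneg hHS.summable]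
      _ = ENNReal.ofReal (w (n + 1) * ((n:ℝ) + 1) ^ (-s)) := by
          rw [hHS.tsum_eq, ← ENNReal.ofReal_mul (hw (n + 1))]
  have hcol : ∀ m : ℕ, ∑' n : ℕ, F n m
      = ENNReal.ofReal (Wsum w m * ((m:ℝ) ^ (-s) - ((m:ℝ) + 1) ^ (-s))) := by
    intro m
    have hz : ∀ n, n ∉ Finset.range m → F n m = 0 := by
      intro n hn
      simp only [Finset.mem_range, not_lt] at hn
      simp only [hF, if_neg (by omega : ¬ n + 1 ≤ m)]
    rw [tsum_eq_sum hz]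
    rcases Nat.eq_zero_or_pos m with hm | hm
    · subst hm
      simp [Wsum_range]
    · have hdm : 0 ≤ (m:ℝ) ^ (-s) - ((m:ℝ) + 1) ^ (-s) :=
        aux_d_nonneg s hs1 hs2 m (by exact_mod_cast hm)
      have heq : ∀ n ∈ Finset.range m,
          F n m = ENNReal.ofReal (w (n + 1) * ((m:ℝ) ^ (-s) - ((m:ℝ) + 1) ^ (-s))) := by
        intro n hn
        simp only [Finset.mem_range] at hn
        simp only [hF, if_pos (by omega : n + 1 ≤ m)]
      rw [Finset.sum_congr rfl heq,
        ← ENNReal.ofReal_sum_of_nonneg (fun i _ => mul_nonneg (hw _) hdm),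
        ← Finset.sum_mul, ← Wsum_range]
  calc ∑' n : ℕ, ENNReal.ofReal (w (n + 1) * ((n:ℝ) + 1) ^ (-s))
      = ∑' n : ℕ, ∑' m : ℕ, F n m := (tsum_congr hrow).symm
    _ = ∑' m : ℕ, ∑' n : ℕ, F n m := ENNReal.tsum_comm
    _ = _ := tsum_congr hcol

private lemma aux_decomp (f : ℕ → ENNReal) : ∑' m : ℕ, f m = f 0 + (f 1 + ∑' n : ℕ, f (n + 2)) := by
  rw [tsum_eq_zero_add' ENNReal.summable, tsum_eq_zero_add' ENNReal.summable]

/-- If the partial sums of `w` satisfy two-sided Chebyshev bounds with exponent `α`,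
then `∑ w n · n^{-2σ}` is comparable, uniformly for `σ ∈ (1/2,1)`, to the
zeta-type sum `∑_{n ≥ 2} n^{-2σ} (log n)^{-α}`. -/
theorem stmt_2 (w : ℕ → ℝ) (hw : ∀ n, 0 ≤ w n) (α : ℝ) (A B : ℝ) (hA : 0 < A) (hB : 0 < B)
    (hcheb : ∀ x : ℝ, 2 ≤ x →
      A * x * Real.log x ^ (-α) ≤
          ∑ n ∈ (Finset.range (⌊x⌋₊ + 1)).filter (fun n : ℕ => 1 ≤ n), w n ∧
        ∑ n ∈ (Finset.range (⌊x⌋₊ + 1)).filter (fun n : ℕ => 1 ≤ n), w n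
          ≤ B * x * Real.log x ^ (-α)) :
    ∃ c C : ℝ, 0 < c ∧ 0 < C ∧ ∀ σ : ℝ, σ ∈ Set.Ioo (1/2 : ℝ) 1 →
      c * (∑' n : ℕ, ((n + 2 : ℝ) ^ (-(2 * σ)) * Real.log (n + 2) ^ (-α)))
          ≤ ∑' n : ℕ, w (n + 1) * ((n + 1 : ℝ) ^ (-(2 * σ))) ∧
        (∑' n : ℕ, w (n + 1) * ((n + 1 : ℝ) ^ (-(2 * σ))))
          ≤ C * ∑' n : ℕ, ((n + 2 : ℝ) ^ (-(2 * σ)) * Real.log (n + 2) ^ (-α)) := by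
  refine ⟨A/2, 10*B, by positivity, by positivity, ?_⟩
  rintro σ ⟨hσ1, hσ2⟩
  have hs1 : (1:ℝ) < 2*σ := by linarith
  have hs2 : (2:ℝ)*σ < 2 := by linarith
  set s : ℝ := 2*σ with hsdef
  have hfil : ∀ N : ℕ, (Finset.range (N+1)).filter (fun n : ℕ => 1 ≤ n) = Finset.Icc 1 N := by
    intro N; ext m; simp only [Finset.mem_filter, Finset.mem_range, Finset.mem_Icc]; omega
  have hWcheb : ∀ N : ℕ, 2 ≤ N →
      A * N * Real.log N ^ (-α) ≤ Wsum w N ∧ Wsum w N ≤ B * N * Real.log N ^ (-α) := by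
    intro N hN
    have h2 : (2:ℝ) ≤ (N:ℝ) := by exact_mod_cast hN
    have h := hcheb (N:ℝ) h2
    simp only [Wsum]
    rwa [Nat.floor_natCast, hfil] at h
  -- positivity of the comparison terms
  have hgpos : ∀ n : ℕ, 0 < ((n:ℝ)+2) ^ (-s) * Real.log ((n:ℝ)+2) ^ (-α) := by
    intro n
    have h0 : (0:ℝ) ≤ (n:ℝ) := Nat.cast_nonneg n
    exact mul_pos (rpow_pos_of_pos (by linarith) _)
      (rpow_pos_of_pos (Real.log_pos (by linarith)) _)
  have hgs : Summable (fun n : ℕ => ((n:ℝ)+2) ^ (-s) * Real.log ((n:ℝ)+2) ^ (-α)) :=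
    aux_summable α s hs1
  have hS0 : 0 ≤ ∑' n : ℕ, ((n:ℝ)+2) ^ (-s) * Real.log ((n:ℝ)+2) ^ (-α) :=
    tsum_nonneg fun n => (hgpos n).le
  have hSof : ENNReal.ofReal (∑' n : ℕ, ((n:ℝ)+2) ^ (-s) * Real.log ((n:ℝ)+2) ^ (-α))
      = ∑' n : ℕ, ENNReal.ofReal (((n:ℝ)+2) ^ (-s) * Real.log ((n:ℝ)+2) ^ (-α)) :=
    ENNReal.ofReal_tsum_of_nonneg (fun n => (hgpos n).le) hgs
  have hlog2 : (0:ℝ) < Real.log 2 ^ (-α) := rpow_pos_of_pos (Real.log_pos one_lt_two) _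
  -- bounds on the tail terms
  have htail_up : ∀ n : ℕ,
      Wsum w (n+2) * ((((n+2:ℕ)):ℝ) ^ (-s) - ((((n+2:ℕ)):ℝ) + 1) ^ (-s))
        ≤ (2*B) * (((n:ℝ)+2) ^ (-s) * Real.log ((n:ℝ)+2) ^ (-α)) := by
    intro n
    have hcast : (((n+2:ℕ)):ℝ) = (n:ℝ)+2 := by push_cast; ring
    rw [hcast]
    have h0 : (0:ℝ) ≤ (n:ℝ) := Nat.cast_nonneg n
    have hx1 : (1:ℝ) ≤ (n:ℝ)+2 := by linarith
    have hL : (0:ℝ) < Real.log ((n:ℝ)+2) ^ (-α) :=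
      rpow_pos_of_pos (Real.log_pos (by linarith)) _
    have hP : (0:ℝ) < ((n:ℝ)+2) ^ (-s) := rpow_pos_of_pos (by linarith) _
    have hWub : Wsum w (n+2) ≤ B * ((n:ℝ)+2) * Real.log ((n:ℝ)+2) ^ (-α) := by
      have h := (hWcheb (n+2) (by omega)).2
      rwa [hcast] at h
    have hdub := (aux_d s hs1.le hs2.le ((n:ℝ)+2) hx1).2
    have hdnn := aux_d_nonneg s hs1.le hs2.le ((n:ℝ)+2) hx1
    have hWnn := Wsum_nonneg w hw (n+2)
    calc Wsum w (n+2) * (((n:ℝ)+2) ^ (-s) - (((n:ℝ)+2) + 1) ^ (-s))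
        ≤ (B * ((n:ℝ)+2) * Real.log ((n:ℝ)+2) ^ (-α))
            * (2 * (((n:ℝ)+2) ^ (-s) / (((n:ℝ)+2) + 1))) :=
          mul_le_mul hWub hdub hdnn (by positivity)
      _ ≤ (2*B) * (((n:ℝ)+2) ^ (-s) * Real.log ((n:ℝ)+2) ^ (-α)) := by
          have hfrac : ((n:ℝ)+2) / (((n:ℝ)+2) + 1) ≤ 1 := by
            rw [div_le_one (by linarith)]; linarith
          calc (B * ((n:ℝ)+2) * Real.log ((n:ℝ)+2) ^ (-α))
                * (2 * (((n:ℝ)+2) ^ (-s) / (((n:ℝ)+2) + 1)))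
              = (2*B*(((n:ℝ)+2) ^ (-s) * Real.log ((n:ℝ)+2) ^ (-α)))
                  * (((n:ℝ)+2) / (((n:ℝ)+2) + 1)) := by ring
            _ ≤ (2*B*(((n:ℝ)+2) ^ (-s) * Real.log ((n:ℝ)+2) ^ (-α))) * 1 :=
                mul_le_mul_of_nonneg_left hfrac (by positivity)
            _ = (2*B) * (((n:ℝ)+2) ^ (-s) * Real.log ((n:ℝ)+2) ^ (-α)) := by ring
  have htail_lo : ∀ n : ℕ,
      (A/2) * (((n:ℝ)+2) ^ (-s) * Real.log ((n:ℝ)+2) ^ (-α))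
        ≤ Wsum w (n+2) * ((((n+2:ℕ)):ℝ) ^ (-s) - ((((n+2:ℕ)):ℝ) + 1) ^ (-s)) := by
    intro n
    have hcast : (((n+2:ℕ)):ℝ) = (n:ℝ)+2 := by push_cast; ring
    rw [hcast]
    have h0 : (0:ℝ) ≤ (n:ℝ) := Nat.cast_nonneg n
    have hx1 : (1:ℝ) ≤ (n:ℝ)+2 := by linarith
    have hL : (0:ℝ) < Real.log ((n:ℝ)+2) ^ (-α) :=
      rpow_pos_of_pos (Real.log_pos (by linarith)) _
    have hP : (0:ℝ) < ((n:ℝ)+2) ^ (-s) := rpow_pos_of_pos (by linarith) _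
    have hWlb : A * ((n:ℝ)+2) * Real.log ((n:ℝ)+2) ^ (-α) ≤ Wsum w (n+2) := by
      have h := (hWcheb (n+2) (by omega)).1
      rwa [hcast] at h
    have hdlb := (aux_d s hs1.le hs2.le ((n:ℝ)+2) hx1).1
    have hWnn := Wsum_nonneg w hw (n+2)
    have hfrac : (1/2:ℝ) ≤ ((n:ℝ)+2) / (((n:ℝ)+2) + 1) := by
      rw [div_le_div_iff₀ (by norm_num) (by linarith)]; linarith
    calc (A/2) * (((n:ℝ)+2) ^ (-s) * Real.log ((n:ℝ)+2) ^ (-α))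
        = (A * (((n:ℝ)+2) ^ (-s) * Real.log ((n:ℝ)+2) ^ (-α))) * (1/2) := by ring
      _ ≤ (A * (((n:ℝ)+2) ^ (-s) * Real.log ((n:ℝ)+2) ^ (-α)))
            * (((n:ℝ)+2) / (((n:ℝ)+2) + 1)) :=
          mul_le_mul_of_nonneg_left hfrac (by positivity)
      _ = (A * ((n:ℝ)+2) * Real.log ((n:ℝ)+2) ^ (-α))
            * (((n:ℝ)+2) ^ (-s) / (((n:ℝ)+2) + 1)) := by ring
      _ ≤ Wsum w (n+2) * (((n:ℝ)+2) ^ (-s) - (((n:ℝ)+2) + 1) ^ (-s)) :=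
          mul_le_mul hWlb hdlb (by positivity) hWnn
  -- the m = 1 term
  have hW2 : Wsum w 2 ≤ B * 2 * Real.log 2 ^ (-α) := by
    have h := (hWcheb 2 le_rfl).2
    norm_num at h
    exact h
  have h14 : (1/4:ℝ) ≤ (2:ℝ) ^ (-s) := by
    have h := Real.rpow_le_rpow_of_exponent_le (one_le_two) (by linarith : (-2:ℝ) ≤ -s)
    have h4 : (2:ℝ) ^ (-2:ℝ) = 1/4 := by
      rw [show (-2:ℝ) = ((-2:ℤ):ℝ) by norm_num, Real.rpow_intCast]; norm_num
    linarith [h4 ▸ h]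
  have hg0' : (1/4) * Real.log 2 ^ (-α)
      ≤ (((0:ℕ):ℝ)+2) ^ (-s) * Real.log (((0:ℕ):ℝ)+2) ^ (-α) := by
    simp only [Nat.cast_zero, zero_add]
    exact mul_le_mul_of_nonneg_right h14 hlog2.le
  have hterm1 : Wsum w 1 * ((((1:ℕ)):ℝ) ^ (-s) - ((((1:ℕ)):ℝ) + 1) ^ (-s))
      ≤ (8*B) * ((1/4) * Real.log 2 ^ (-α)) := by
    have hd1 : (((1:ℕ)):ℝ) ^ (-s) - ((((1:ℕ)):ℝ) + 1) ^ (-s) ≤ 1 := by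
      simp only [Nat.cast_one, Real.one_rpow]
      have h : (0:ℝ) ≤ ((1:ℝ)+1) ^ (-s) := (rpow_pos_of_pos (by norm_num) _).le
      linarith
    have hd1nn : 0 ≤ (((1:ℕ)):ℝ) ^ (-s) - ((((1:ℕ)):ℝ) + 1) ^ (-s) :=
      aux_d_nonneg s hs1.le hs2.le _ (by norm_num)
    calc Wsum w 1 * ((((1:ℕ)):ℝ) ^ (-s) - ((((1:ℕ)):ℝ) + 1) ^ (-s))
        ≤ Wsum w 2 * 1 :=
          mul_le_mul (Wsum_mono w hw (by omega)) hd1 hd1nn (Wsum_nonneg w hw 2)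
      _ = Wsum w 2 := mul_one _
      _ ≤ B * 2 * Real.log 2 ^ (-α) := hW2
      _ = (8*B) * ((1/4) * Real.log 2 ^ (-α)) := by ring
  -- ENNReal assembly
  have htone := aux_tonelli w hw s hs1.le hs2.le
  have hdec := aux_decomp
    (fun m : ℕ => ENNReal.ofReal (Wsum w m * ((m:ℝ) ^ (-s) - ((m:ℝ) + 1) ^ (-s))))
  have hz : ENNReal.ofReal (Wsum w 0 * ((((0:ℕ)):ℝ) ^ (-s) - ((((0:ℕ)):ℝ) + 1) ^ (-s))) = 0 := by
    have h : Wsum w 0 = 0 := by simp [Wsum]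
    simp [h]
  have hup : (∑' m : ℕ, ENNReal.ofReal (Wsum w m * ((m:ℝ) ^ (-s) - ((m:ℝ) + 1) ^ (-s))))
      ≤ ENNReal.ofReal (10*B)
        * ∑' n : ℕ, ENNReal.ofReal (((n:ℝ)+2) ^ (-s) * Real.log ((n:ℝ)+2) ^ (-α)) := by
    refine le_trans (le_of_eq hdec) ?_
    have h1 : ENNReal.ofReal (Wsum w 1 * ((((1:ℕ)):ℝ) ^ (-s) - ((((1:ℕ)):ℝ) + 1) ^ (-s)))
        ≤ ENNReal.ofReal (8*B)
          * ∑' n : ℕ, ENNReal.ofReal (((n:ℝ)+2) ^ (-s) * Real.log ((n:ℝ)+2) ^ (-α)) := by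
      calc ENNReal.ofReal (Wsum w 1 * ((((1:ℕ)):ℝ) ^ (-s) - ((((1:ℕ)):ℝ) + 1) ^ (-s)))
          ≤ ENNReal.ofReal ((8*B) * ((1/4) * Real.log 2 ^ (-α))) :=
            ENNReal.ofReal_le_ofReal hterm1
        _ = ENNReal.ofReal (8*B) * ENNReal.ofReal ((1/4) * Real.log 2 ^ (-α)) :=
            ENNReal.ofReal_mul (by positivity)
        _ ≤ ENNReal.ofReal (8*B)
              * ∑' n : ℕ, ENNReal.ofReal (((n:ℝ)+2) ^ (-s) * Real.log ((n:ℝ)+2) ^ (-α)) := by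
            refine mul_le_mul_right ?_ _
            exact (ENNReal.ofReal_le_ofReal hg0').trans (ENNReal.le_tsum 0)
    have h2 : (∑' n : ℕ, ENNReal.ofReal (Wsum w (n+2)
          * ((((n+2:ℕ)):ℝ) ^ (-s) - ((((n+2:ℕ)):ℝ) + 1) ^ (-s))))
        ≤ ENNReal.ofReal (2*B)
          * ∑' n : ℕ, ENNReal.ofReal (((n:ℝ)+2) ^ (-s) * Real.log ((n:ℝ)+2) ^ (-α)) := by
      calc (∑' n : ℕ, ENNReal.ofReal (Wsum w (n+2)
            * ((((n+2:ℕ)):ℝ) ^ (-s) - ((((n+2:ℕ)):ℝ) + 1) ^ (-s))))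
          ≤ ∑' n : ℕ, ENNReal.ofReal ((2*B)
              * (((n:ℝ)+2) ^ (-s) * Real.log ((n:ℝ)+2) ^ (-α))) :=
            ENNReal.tsum_le_tsum fun n => ENNReal.ofReal_le_ofReal (htail_up n)
        _ = ∑' n : ℕ, ENNReal.ofReal (2*B)
              * ENNReal.ofReal (((n:ℝ)+2) ^ (-s) * Real.log ((n:ℝ)+2) ^ (-α)) :=
            tsum_congr fun n => ENNReal.ofReal_mul (by positivity)
        _ = ENNReal.ofReal (2*B)
              * ∑' n : ℕ, ENNReal.ofReal (((n:ℝ)+2) ^ (-s) * Real.log ((n:ℝ)+2) ^ (-α)) :=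
            ENNReal.tsum_mul_left
    calc ENNReal.ofReal (Wsum w 0 * ((((0:ℕ)):ℝ) ^ (-s) - ((((0:ℕ)):ℝ) + 1) ^ (-s)))
          + (ENNReal.ofReal (Wsum w 1 * ((((1:ℕ)):ℝ) ^ (-s) - ((((1:ℕ)):ℝ) + 1) ^ (-s)))
            + ∑' n : ℕ, ENNReal.ofReal (Wsum w (n+2)
                * ((((n+2:ℕ)):ℝ) ^ (-s) - ((((n+2:ℕ)):ℝ) + 1) ^ (-s))))
        = ENNReal.ofReal (Wsum w 1 * ((((1:ℕ)):ℝ) ^ (-s) - ((((1:ℕ)):ℝ) + 1) ^ (-s)))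
            + ∑' n : ℕ, ENNReal.ofReal (Wsum w (n+2)
                * ((((n+2:ℕ)):ℝ) ^ (-s) - ((((n+2:ℕ)):ℝ) + 1) ^ (-s))) := by
          rw [hz, zero_add]
      _ ≤ ENNReal.ofReal (8*B)
              * (∑' n : ℕ, ENNReal.ofReal (((n:ℝ)+2) ^ (-s) * Real.log ((n:ℝ)+2) ^ (-α)))
            + ENNReal.ofReal (2*B)
              * (∑' n : ℕ, ENNReal.ofReal (((n:ℝ)+2) ^ (-s) * Real.log ((n:ℝ)+2) ^ (-α))) :=
          add_le_add h1 h2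
      _ = (ENNReal.ofReal (8*B) + ENNReal.ofReal (2*B))
            * ∑' n : ℕ, ENNReal.ofReal (((n:ℝ)+2) ^ (-s) * Real.log ((n:ℝ)+2) ^ (-α)) :=
          (add_mul _ _ _).symm
      _ = ENNReal.ofReal (10*B)
            * ∑' n : ℕ, ENNReal.ofReal (((n:ℝ)+2) ^ (-s) * Real.log ((n:ℝ)+2) ^ (-α)) := by
          rw [← ENNReal.ofReal_add (by positivity) (by positivity),
            show (8*B) + (2*B) = 10*B by ring]
  have hlo : ENNReal.ofReal (A/2)
        * (∑' n : ℕ, ENNReal.ofReal (((n:ℝ)+2) ^ (-s) * Real.log ((n:ℝ)+2) ^ (-α)))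
      ≤ ∑' m : ℕ, ENNReal.ofReal (Wsum w m * ((m:ℝ) ^ (-s) - ((m:ℝ) + 1) ^ (-s))) := by
    refine le_trans ?_ (le_of_eq hdec.symm)
    calc ENNReal.ofReal (A/2)
          * (∑' n : ℕ, ENNReal.ofReal (((n:ℝ)+2) ^ (-s) * Real.log ((n:ℝ)+2) ^ (-α)))
        = ∑' n : ℕ, ENNReal.ofReal (A/2)
            * ENNReal.ofReal (((n:ℝ)+2) ^ (-s) * Real.log ((n:ℝ)+2) ^ (-α)) :=
          ENNReal.tsum_mul_left.symm
      _ = ∑' n : ℕ, ENNReal.ofReal ((A/2) * (((n:ℝ)+2) ^ (-s) * Real.log ((n:ℝ)+2) ^ (-α))) :=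
          tsum_congr fun n => (ENNReal.ofReal_mul (by positivity)).symm
      _ ≤ ∑' n : ℕ, ENNReal.ofReal (Wsum w (n+2)
            * ((((n+2:ℕ)):ℝ) ^ (-s) - ((((n+2:ℕ)):ℝ) + 1) ^ (-s))) :=
          ENNReal.tsum_le_tsum fun n => ENNReal.ofReal_le_ofReal (htail_lo n)
      _ ≤ ENNReal.ofReal (Wsum w 1 * ((((1:ℕ)):ℝ) ^ (-s) - ((((1:ℕ)):ℝ) + 1) ^ (-s)))
            + ∑' n : ℕ, ENNReal.ofReal (Wsum w (n+2)
                * ((((n+2:ℕ)):ℝ) ^ (-s) - ((((n+2:ℕ)):ℝ) + 1) ^ (-s))) :=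
          self_le_add_left _ _
      _ ≤ ENNReal.ofReal (Wsum w 0 * ((((0:ℕ)):ℝ) ^ (-s) - ((((0:ℕ)):ℝ) + 1) ^ (-s)))
            + (ENNReal.ofReal (Wsum w 1 * ((((1:ℕ)):ℝ) ^ (-s) - ((((1:ℕ)):ℝ) + 1) ^ (-s)))
              + ∑' n : ℕ, ENNReal.ofReal (Wsum w (n+2)
                  * ((((n+2:ℕ)):ℝ) ^ (-s) - ((((n+2:ℕ)):ℝ) + 1) ^ (-s)))) :=
          self_le_add_left _ _
  -- transfer back to the reals
  have hTnn : ∀ n : ℕ, 0 ≤ w (n+1) * ((n:ℝ)+1) ^ (-s) := fun n =>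
    mul_nonneg (hw _) (rpow_pos_of_pos (by positivity) _).le
  have hTfin : (∑' n : ℕ, ENNReal.ofReal (w (n+1) * ((n:ℝ)+1) ^ (-s))) ≠ ⊤ := by
    rw [htone]
    refine ne_top_of_le_ne_top ?_ hup
    rw [← hSof]
    exact ENNReal.mul_ne_top ENNReal.ofReal_ne_top ENNReal.ofReal_ne_top
  have hTsum : Summable (fun n : ℕ => w (n+1) * ((n:ℝ)+1) ^ (-s)) := by
    have h := ENNReal.summable_toReal hTfin
    exact h.congr fun n => ENNReal.toReal_ofReal (hTnn n)
  have hTof : ENNReal.ofReal (∑' n : ℕ, w (n+1) * ((n:ℝ)+1) ^ (-s))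
      = ∑' n : ℕ, ENNReal.ofReal (w (n+1) * ((n:ℝ)+1) ^ (-s)) :=
    ENNReal.ofReal_tsum_of_nonneg hTnn hTsum
  constructor
  · rw [← ENNReal.ofReal_le_ofReal_iff (tsum_nonneg hTnn)]
    rw [ENNReal.ofReal_mul (by positivity), hSof, hTof, htone]
    exact hlo
  · rw [← ENNReal.ofReal_le_ofReal_iff (mul_nonneg (by positivity) hS0)]
    rw [ENNReal.ofReal_mul (by positivity), hSof, hTof, htone]
    exact hup
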